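/- Longest common substring via adjacent suffixes: let T = S₁$S₂ with $ a separator not occurring in S₁ or S₂, and let SA and ISA be the suffix array and inverse suffix array of T. If W is a longest common substring of S₁ and S₂, then there exist occurrences S₁[i₁..j₁] = W and S₂[i₂..j₂] = W such that |ISA[i₁] − ISA[|S₁|+1+i₂]| = 1, i.e., the corresponding suffixes of T are adjacent in lexicographic order. -/

import Mathlib

/-- Sandwich lemma: if `W` is a prefix of `A` and of `C`, and `A < B < C`
lexicographically, then `W` is a prefix of `B`. -/
theorem lex_sandwich {α : Type*} [LinearOrder α] (W : List α) :
    ∀ (A B C : List α), W <+: A → W <+: C →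
      List.Lex (· < ·) A B → List.Lex (· < ·) B C → W <+: B := by
  induction W with
  | nil => exact fun _ B _ _ _ _ _ => List.nil_prefix
  | cons w W ih =>
    rintro A B C ⟨A', rfl⟩ ⟨C', rfl⟩ hAB hBC
    rw [List.cons_append] at hAB hBC
    cases B with
    | nil => cases hAB
    | cons b B' =>
      cases hAB with
      | rel h =>
        cases hBC with
        | rel h' => exact absurd (h.trans h') (lt_irrefl _)
        | cons _ => exact absurd h (lt_irrefl _)
      | cons h =>
        cases hBC with
        | rel h' => exact absurd h' (lt_irrefl _)
        | cons h' =>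
          exact List.cons_prefix_cons.mpr ⟨rfl, ih _ _ _ ⟨A', rfl⟩ ⟨C', rfl⟩ h h'⟩

/-- Longest common substring via adjacent suffixes: let `T = S₁ ++ [$] ++ S₂`
where `$` occurs in neither `S₁` nor `S₂`, and let `ISA` be the inverse suffix
array of `T` (the rank function of suffixes in lexicographic order).  If `W`
is a longest common substring of `S₁` and `S₂`, then there are occurrences
`S₁[i₁..] = W` and `S₂[i₂..] = W` whose corresponding suffixes of `T` are
adjacent in lexicographic order: `|ISA i₁ − ISA (|S₁| + 1 + i₂)| = 1`. -/
theorem stmt9 {α : Type*} [LinearOrder α] (S1 S2 : List α) (sep : α)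
    (hS1 : S1 ≠ []) (hS2 : S2 ≠ [])
    (h1 : sep ∉ S1) (h2 : sep ∉ S2)
    (T : List α) (hT : T = S1 ++ [sep] ++ S2)
    (ISA : ℕ → ℕ)
    (hbij : Set.BijOn ISA (Set.Iio T.length) (Set.Iio T.length))
    (hord : ∀ i j, i < T.length → j < T.length →
      (ISA i < ISA j ↔ T.drop i < T.drop j))
    (W : List α)
    (hW1 : W <:+: S1) (hW2 : W <:+: S2)
    (hWmax : ∀ W', W' <:+: S1 → W' <:+: S2 → W'.length ≤ W.length) :
    ∃ i1 i2 : ℕ,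
      i1 + W.length ≤ S1.length ∧ (S1.drop i1).take W.length = W ∧
      i2 + W.length ≤ S2.length ∧ (S2.drop i2).take W.length = W ∧
      (ISA (S1.length + 1 + i2) = ISA i1 + 1 ∨
        ISA i1 = ISA (S1.length + 1 + i2) + 1) := by
  classical
  have hdist : ∀ x y : ℕ, Nat.dist x y = x - y + (y - x) := fun _ _ => rfl
  have hTlen : T.length = S1.length + 1 + S2.length := by
    simp [hT]; omega
  -- occurrence predicates (positions in T)
  set PA : ℕ → Prop := fun p => p + W.length ≤ S1.length ∧ (T.drop p).take W.length = W
    with hPA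
  set PB : ℕ → Prop := fun p =>
      S1.length + 1 ≤ p ∧ p < T.length ∧ (T.drop p).take W.length = W with hPB
  have hdropT : ∀ p, p ≤ S1.length → T.drop p = S1.drop p ++ [sep] ++ S2 := by
    intro p hp
    rw [hT, List.append_assoc, List.drop_append_of_le_length hp, ← List.append_assoc]
  have htakeA : ∀ p, p + W.length ≤ S1.length →
      (T.drop p).take W.length = (S1.drop p).take W.length := by
    intro p hp
    rw [hdropT p (by omega), List.append_assoc,
      List.take_append_of_le_length (by simp [List.length_drop]; omega)]
  have hdropB : ∀ i2, T.drop (S1.length + 1 + i2) = S2.drop i2 := by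
    intro i2
    have h : S1.length + 1 + i2 = (S1 ++ [sep]).length + i2 := by simp
    rw [hT, h, List.drop_append]; simp
  have hsepW : sep ∉ W := fun h => h1 (hW1.subset h)
  -- classification of any occurrence of W in T
  have hclass : ∀ p, p < T.length → (T.drop p).take W.length = W → PA p ∨ PB p := by
    intro p hp htk
    by_cases hcase : S1.length + 1 ≤ p
    · exact Or.inr ⟨hcase, hp, htk⟩
    · left
      refine ⟨?_, htk⟩
      by_contra hcon
      push_neg at hcase hcon
      have hmem : sep ∈ W := by
        rw [← htk, hdropT p (by omega), List.append_assoc, List.take_append]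
        have hm1 : W.length - (S1.drop p).length =
            (W.length - (S1.length - p) - 1) + 1 := by
          simp only [List.length_drop]; omega
        rw [hm1]
        simp
      exact hsepW hmem
  -- PA is nonempty
  obtain ⟨s, t, hst⟩ := hW1
  have hslen : s.length + W.length ≤ S1.length := by
    have := congrArg List.length hst; simp at this; omega
  have hdropS1 : S1.drop s.length = W ++ t := by
    rw [← hst, List.append_assoc, List.drop_left]
  have ha0 : PA s.length := by
    refine ⟨hslen, ?_⟩
    rw [htakeA _ hslen, hdropS1, List.take_left]
  -- PB is nonempty
  have hb0 : ∃ i2 < S2.length, (S2.drop i2).take W.length = W := by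
    obtain ⟨s', t', hst'⟩ := hW2
    have hlen' := congrArg List.length hst'
    simp at hlen'
    rcases Nat.lt_or_ge s'.length S2.length with h | h
    · refine ⟨s'.length, h, ?_⟩
      rw [← hst', List.append_assoc, List.drop_left, List.take_left]
    · have hW0 : W.length = 0 := by omega
      refine ⟨0, List.length_pos_iff.mpr hS2, ?_⟩
      simp [hW0, List.eq_nil_of_length_eq_zero hW0]
  obtain ⟨j2, hj2, hj2tk⟩ := hb0
  have hb0' : PB (S1.length + 1 + j2) := by
    refine ⟨by omega, by omega, ?_⟩
    rw [hdropB]; exact hj2tk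
  -- minimization over rank distance
  set P : ℕ → Prop := fun d =>
    ∃ a b, PA a ∧ PB b ∧ Nat.dist (ISA a) (ISA b) = d with hPdef
  have hPex : ∃ d, P d := ⟨_, _, _, ha0, hb0', rfl⟩
  -- basic facts about any PA/PB pair
  have haT : ∀ a, PA a → a < T.length := fun a ha => by
    have := ha.1; omega
  have hne : ∀ a b, PA a → PB b → ISA a ≠ ISA b := by
    intro a b ha hb h
    have hab : a ≠ b := by have := ha.1; have := hb.1; omega
    exact hab (hbij.injOn (by exact haT a ha) (by exact hb.2.1) h)
  -- the descent step
  have key : ∀ a b, PA a → PB b → 2 ≤ Nat.dist (ISA a) (ISA b) →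
      ∃ d' < Nat.dist (ISA a) (ISA b), P d' := by
    intro a b ha hb h2
    have haT' : a < T.length := haT a ha
    have hbT' : b < T.length := hb.2.1
    have hISAa : ISA a < T.length := hbij.mapsTo haT'
    have hISAb : ISA b < T.length := hbij.mapsTo hbT'
    have hpa : W <+: T.drop a := by rw [← ha.2]; exact List.take_prefix _ _
    have hpb : W <+: T.drop b := by rw [← hb.2.2]; exact List.take_prefix _ _
    rcases lt_or_gt_of_ne (hne a b ha hb) with hlt | hgt
    · -- ISA a < ISA b
      have hr : ISA a + 1 < ISA b := by rw [hdist] at h2; omega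
      obtain ⟨p', hp'mem, hp'⟩ := hbij.surjOn (show ISA a + 1 ∈ Set.Iio T.length by
        simp only [Set.mem_Iio]; omega)
      have hp'T : p' < T.length := hp'mem
      have hl1 : T.drop a < T.drop p' := (hord a p' haT' hp'T).mp (by omega)
      have hl2 : T.drop p' < T.drop b := (hord p' b hp'T hbT').mp (by omega)
      have hpre : W <+: T.drop p' := lex_sandwich W _ _ _ hpa hpb hl1 hl2
      have htk' : (T.drop p').take W.length = W := by
        conv_rhs => rw [List.prefix_iff_eq_take.mp hpre]
      rcases hclass p' hp'T htk' with hA' | hB'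
      · refine ⟨Nat.dist (ISA p') (ISA b), ?_, p', b, hA', hb, rfl⟩
        rw [hdist, hdist, hp']; omega
      · refine ⟨Nat.dist (ISA a) (ISA p'), ?_, a, p', ha, hB', rfl⟩
        rw [hdist, hdist, hp']; omega
    · -- ISA b < ISA a
      have hr : ISA b + 1 < ISA a := by rw [hdist] at h2; omega
      obtain ⟨p', hp'mem, hp'⟩ := hbij.surjOn (show ISA b + 1 ∈ Set.Iio T.length by
        simp only [Set.mem_Iio]; omega)
      have hp'T : p' < T.length := hp'mem
      have hl1 : T.drop b < T.drop p' := (hord b p' hbT' hp'T).mp (by omega)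
      have hl2 : T.drop p' < T.drop a := (hord p' a hp'T haT').mp (by omega)
      have hpre : W <+: T.drop p' := lex_sandwich W _ _ _ hpb hpa hl1 hl2
      have htk' : (T.drop p').take W.length = W := by
        conv_rhs => rw [List.prefix_iff_eq_take.mp hpre]
      rcases hclass p' hp'T htk' with hA' | hB'
      · refine ⟨Nat.dist (ISA p') (ISA b), ?_, p', b, hA', hb, rfl⟩
        rw [hdist, hdist, hp']; omega
      · refine ⟨Nat.dist (ISA a) (ISA p'), ?_, a, p', ha, hB', rfl⟩
        rw [hdist, hdist, hp']; omega
  -- the minimal distance is 1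
  obtain ⟨a, b, ha, hb, hd⟩ := Nat.find_spec hPex
  have hd1 : Nat.dist (ISA a) (ISA b) = 1 := by
    have hne' := hne a b ha hb
    have h0 : Nat.dist (ISA a) (ISA b) ≠ 0 := by rw [hdist]; omega
    by_contra hcon
    have h2 : 2 ≤ Nat.dist (ISA a) (ISA b) := by
      rw [hdist] at hcon ⊢; omega
    obtain ⟨d', hd'lt, hd'P⟩ := key a b ha hb h2
    rw [hd] at hd'lt
    exact Nat.find_min hPex hd'lt hd'P
  -- conclude
  have hb1 := hb.1
  have hbT' : b < T.length := hb.2.1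
  have hWlen : b + W.length ≤ T.length := by
    have := congrArg List.length hb.2.2
    simp only [List.length_take, List.length_drop] at this
    omega
  refine ⟨a, b - (S1.length + 1), ha.1, ?_, ?_, ?_, ?_⟩
  · rw [← htakeA a ha.1]; exact ha.2
  · omega
  · have hbeq : S1.length + 1 + (b - (S1.length + 1)) = b := by omega
    rw [← hdropB, hbeq]; exact hb.2.2
  · have hbeq : S1.length + 1 + (b - (S1.length + 1)) = b := by omega
    rw [hbeq]
    rw [hdist] at hd1
    rcases Nat.lt_or_ge (ISA a) (ISA b) with h | h
    · left; omega
    · right; omega
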